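/- Let g : ℝⁿ → ℝ satisfy g(v) ≤ C(1 + |v₁|^{2m₁} + … + |v_n|^{2m_n}) for all v. Then its Legendre transform L(η) = sup_v {η·v − g(v)} satisfies L(η) ≥ C̃(|η₁|^{2m₁/(2m₁−1)} + … + |η_n|^{2m_n/(2m_n−1)}) − C, where C̃ > 0 depends only on C, m₁,…,m_n, and n. -/

import Mathlib

lemma key_one (m : ℕ) (hm : 1 ≤ m) (C : ℝ) (hC : 0 < C) (M : ℕ) (hMm : m ≤ M) (η : ℝ) :
    ∃ v : ℝ, min 1 (1 / (2 * M * C)) / 2 * |η| ^ ((2 * m : ℝ) / (2 * m - 1)) ≤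
      η * v - C * |v| ^ (2 * m) := by
  have hm' : (1 : ℝ) ≤ m := by exact_mod_cast hm
  have hk2 : (2 : ℝ) ≤ (2 * m : ℕ) := by push_cast; linarith
  set k : ℕ := 2 * m with hk
  have hr : (0 : ℝ) < (k : ℝ) - 1 := by linarith
  set q : ℝ := 1 / ((k : ℝ) - 1) with hq
  set p : ℝ := (k : ℝ) / ((k : ℝ) - 1) with hp
  have hpq : p = q + 1 := by rw [hp, hq]; field_simp; ring
  have hppos : 0 < p := by positivity
  have hMpos : (0 : ℝ) < M := by
    have : 1 ≤ M := le_trans hm hMm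
    exact_mod_cast this
  have hexp : (2 * m : ℝ) / (2 * m - 1) = p := by rw [hp, hk]; push_cast; ring
  by_cases hη : η = 0
  · refine ⟨0, ?_⟩
    simp [hη, Real.zero_rpow (ne_of_gt (hexp ▸ hppos)), zero_pow (by omega : k ≠ 0)]
  have habs : 0 < |η| := abs_pos.mpr hη
  set A : ℝ := (k : ℝ) * C with hA
  have hApos : 0 < A := by positivity
  set t : ℝ := (|η| / A) ^ q with ht
  have htpos : 0 < t := Real.rpow_pos_of_pos (by positivity) q
  refine ⟨(if η < 0 then -1 else 1) * t, ?_⟩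
  have hηv : η * ((if η < 0 then -1 else 1) * t) = |η| * t := by
    rcases lt_or_ge η 0 with h | h
    · rw [if_pos h, abs_of_neg h]; ring
    · rw [if_neg (not_lt.mpr h), abs_of_nonneg h]; ring
  have hvabs : |(if η < 0 then -1 else 1) * t| = t := by
    rcases lt_or_ge η 0 with h | h
    · rw [if_pos h]; rw [abs_mul]; simp [abs_of_pos htpos]
    · rw [if_neg (not_lt.mpr h)]; simp [abs_of_pos htpos]
  rw [hηv, hvabs, hexp]
  have hbase : (0 : ℝ) ≤ |η| / A := by positivity
  have htk : t ^ k = |η| ^ p / A ^ p := by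
    rw [ht, ← Real.rpow_natCast ((|η| / A) ^ q) k, ← Real.rpow_mul hbase,
      Real.div_rpow habs.le hApos.le]
    congr 2 <;> · rw [hq, hp]; field_simp
  have hηt : |η| * t = |η| ^ p / A ^ q := by
    rw [ht, Real.div_rpow habs.le hApos.le, hpq, Real.rpow_add habs, Real.rpow_one]
    ring
  rw [htk, hηt]
  have hAp : A ^ p = A ^ q * A := by
    rw [hpq, Real.rpow_add hApos, Real.rpow_one]
  have hAqpos : 0 < A ^ q := Real.rpow_pos_of_pos hApos q
  have hk0 : (k : ℝ) ≠ 0 := by positivity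
  have hCA : C / A = 1 / (k : ℝ) := by
    rw [hA]; field_simp
  -- key constant bound: min 1 (1/(2*M*C)) ≤ 1 / A ^ q
  have hmin : min 1 (1 / (2 * M * C)) ≤ 1 / A ^ q := by
    rcases le_or_gt 1 A with hA1 | hA1
    · have hq1 : q ≤ 1 := by
        rw [hq]; rw [div_le_one hr]; linarith
      have : A ^ q ≤ A ^ (1 : ℝ) := Real.rpow_le_rpow_of_exponent_le hA1 hq1
      rw [Real.rpow_one] at this
      have h1 : 1 / A ≤ 1 / A ^ q := by
        apply one_div_le_one_div_of_le hAqpos this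
      have h2 : 1 / (2 * M * C) ≤ 1 / A := by
        apply one_div_le_one_div_of_le hApos
        rw [hA]
        have : (k : ℝ) ≤ 2 * M := by
          have : k ≤ 2 * M := by omega
          exact_mod_cast this
        nlinarith
      exact le_trans (min_le_right _ _) (le_trans h2 h1)
    · have : A ^ q ≤ 1 := Real.rpow_le_one hApos.le hA1.le (by positivity)
      have h1 : (1 : ℝ) ≤ 1 / A ^ q := by
        rw [le_one_div (by norm_num) hAqpos]; simpa using this
      exact le_trans (min_le_left _ _) h1
  have hηp : 0 ≤ |η| ^ p := Real.rpow_nonneg habs.le p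
  have h1 : C * (|η| ^ p / (A ^ q * A)) = |η| ^ p * (1 / A ^ q) * (1 / (k : ℝ)) := by
    rw [hA]; field_simp
  have hstep : |η| ^ p / A ^ q - C * (|η| ^ p / A ^ p) =
      |η| ^ p * (1 / A ^ q) * (1 - 1 / (k : ℝ)) := by
    rw [hAp, h1]; ring
  rw [hstep]
  have hhalf : (1 : ℝ) / 2 ≤ 1 - 1 / (k : ℝ) := by
    have : 1 / (k : ℝ) ≤ 1 / 2 := by
      apply one_div_le_one_div_of_le (by norm_num) hk2
    linarith
  calc min 1 (1 / (2 * M * C)) / 2 * |η| ^ p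
      ≤ (1 / A ^ q) * (1 - 1 / (k : ℝ)) * |η| ^ p := by
        apply mul_le_mul_of_nonneg_right _ hηp
        have h1 : 0 ≤ 1 / A ^ q := le_of_lt (by positivity)
        calc min 1 (1 / (2 * M * C)) / 2 ≤ (1 / A ^ q) * (1 / 2) := by
              rw [div_eq_mul_one_div]
              exact mul_le_mul hmin le_rfl (by norm_num) h1
          _ ≤ (1 / A ^ q) * (1 - 1 / (k : ℝ)) := by
              exact mul_le_mul_of_nonneg_left hhalf h1
    _ = |η| ^ p * (1 / A ^ q) * (1 - 1 / (k : ℝ)) := by ring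

theorem stmt11 (n : ℕ) (m : Fin n → ℕ) (hm : ∀ i, 1 ≤ m i) (C : ℝ) (hC : 0 < C) :
    ∃ Ct : ℝ, 0 < Ct ∧
      ∀ g : (Fin n → ℝ) → ℝ,
        (∀ v, g v ≤ C * (1 + ∑ i, |v i| ^ (2 * m i))) →
        ∀ η : Fin n → ℝ, ∃ v : Fin n → ℝ,
          Ct * (∑ i, |η i| ^ ((2 * m i : ℝ) / (2 * m i - 1))) - C
            ≤ (∑ i, η i * v i) - g v := by
  set M : ℕ := 1 + ∑ i, m i with hM
  have hMi : ∀ i, m i ≤ M := by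
    intro i
    have := Finset.single_le_sum (f := m) (fun j _ => Nat.zero_le _) (Finset.mem_univ i)
    omega
  have hMpos : (0 : ℝ) < M := by
    have : 0 < M := by omega
    exact_mod_cast this
  refine ⟨min 1 (1 / (2 * M * C)) / 2, by positivity, ?_⟩
  intro g hg η
  choose v hv using fun i => key_one (m i) (hm i) C hC M (hMi i) (η i)
  refine ⟨v, ?_⟩
  have hsum : ∑ i, (min 1 (1 / (2 * M * C)) / 2 * |η i| ^ ((2 * m i : ℝ) / (2 * m i - 1))) ≤
      ∑ i, (η i * v i - C * |v i| ^ (2 * m i)) :=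
    Finset.sum_le_sum fun i _ => hv i
  rw [Finset.sum_sub_distrib, ← Finset.mul_sum, ← Finset.mul_sum] at hsum
  have hgv := hg v
  nlinarith [hsum, hgv]
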